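/- Let φ be a rational inner function on 𝔻^d, let α ∈ 𝕋, and let σ_α be the associated Clark measure. Let B ⊂ 𝕋^d be an open set such that lim_{r→1⁻} φ(rζ) ≠ α for every ζ ∈ B. For ζ ∈ 𝕋^d and 0 < r < 1 define D_r(ζ) = {η ∈ 𝕋^d : |rζ_j − η_j| ≤ 2(1−r) for j = 1,…,d}. Then for every ζ ∈ B, lim_{r→1⁻} σ_α(B ∩ D_r(ζ))/(1−r)^d = 0. -/

import Mathlib

open MeasureTheory Complex Filter Topology

noncomputable section

/-- The open unit polydisk `𝔻^d` in `ℂ^d`. -/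
def polyDisk (d : ℕ) : Set (Fin d → ℂ) := {z | ∀ j, ‖z j‖ < 1}

/-- The distinguished boundary `𝕋^d` of the polydisk. -/
def polyTorus (d : ℕ) : Set (Fin d → ℂ) := {z | ∀ j, ‖z j‖ = 1}

/-- The product Poisson kernel `P_z(ζ) = ∏_j (1-|z_j|²)/|ζ_j - z_j|²`. -/
def poissonD (d : ℕ) (z ζ : Fin d → ℂ) : ℝ :=
  ∏ j, (1 - ‖z j‖ ^ 2) / ‖ζ j - z j‖ ^ 2

/-- `φ` has radial limit `L` at `ζ`:  `φ(rζ) → L` as `r → 1⁻`. -/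
def HasRadialLimit (d : ℕ) (φ : (Fin d → ℂ) → ℂ) (ζ : Fin d → ℂ) (L : ℂ) : Prop :=
  Tendsto (fun r : ℝ => φ (fun j => (r : ℂ) * ζ j)) (𝓝[<] (1 : ℝ)) (𝓝 L)

/-- Normalized Lebesgue measure on the d-torus, as a measure on `ℂ^d`. -/
def torusLebesgue (d : ℕ) : Measure (Fin d → ℂ) :=
  (ENNReal.ofReal ((2 * Real.pi) ^ d))⁻¹ •
    Measure.map (fun θ : Fin d → ℝ => fun j => Complex.exp ((θ j : ℂ) * Complex.I))
      (MeasureTheory.volume.restrict (Set.pi Set.univ fun _ => Set.Ico 0 (2 * Real.pi)))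

/-- `φ = q/p` is a rational inner function on `𝔻^d`: `p, q` have no common factor,
`p` is zero-free on the polydisk, `φ` maps `𝔻^d` to `𝔻`, and the radial limits of `φ`
are unimodular a.e. on `𝕋^d`. -/
structure IsRIFd (d : ℕ) (p q : MvPolynomial (Fin d) ℂ) : Prop where
  coprime : ∀ r : MvPolynomial (Fin d) ℂ, r ∣ p → r ∣ q → IsUnit r
  stable : ∀ z ∈ polyDisk d, MvPolynomial.eval z p ≠ 0
  mapsToDisk : ∀ z ∈ polyDisk d,
    ‖MvPolynomial.eval z q / MvPolynomial.eval z p‖ < 1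
  inner : ∀ᵐ ζ ∂(torusLebesgue d),
    ∃ L : ℂ, ‖L‖ = 1 ∧
      HasRadialLimit d (fun z => MvPolynomial.eval z q / MvPolynomial.eval z p) ζ L

/-- `σ` is the Clark measure of `φ` at parameter `α`: a positive Borel measure on `𝕋^d`
whose Poisson integral is `(1-|φ(z)|²)/|α-φ(z)|²`. -/
def IsClarkMeasureD (d : ℕ) (φ : (Fin d → ℂ) → ℂ) (α : ℂ) (σ : Measure (Fin d → ℂ)) : Prop :=
  σ (polyTorus d)ᶜ = 0 ∧
  ∀ z ∈ polyDisk d,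
    ∫⁻ ζ, ENNReal.ofReal (poissonD d z ζ) ∂σ =
      ENNReal.ofReal ((1 - ‖φ z‖ ^ 2) / ‖α - φ z‖ ^ 2)

/-- The unimodular level set `C_α(φ)`. -/
def levelSetD (d : ℕ) (φ : (Fin d → ℂ) → ℂ) (α : ℂ) : Set (Fin d → ℂ) :=
  closure {ζ | ζ ∈ polyTorus d ∧ HasRadialLimit d φ ζ α}

/-- The topological support of a measure: points all of whose open neighborhoods
have positive measure. -/
def measureSupport {X : Type*} [TopologicalSpace X] [MeasurableSpace X]
    (μ : Measure X) : Set X :=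
  {x | ∀ U : Set X, IsOpen U → x ∈ U → 0 < μ U}

/-- The cube `D_r(ζ) = {η ∈ 𝕋^d : |rζ_j − η_j| ≤ 2(1−r), j = 1,…,d}`. -/
def clarkCube (d : ℕ) (r : ℝ) (ζ : Fin d → ℂ) : Set (Fin d → ℂ) :=
  {η | η ∈ polyTorus d ∧ ∀ j, ‖(r : ℂ) * ζ j - η j‖ ≤ 2 * (1 - r)}

namespace ClarkAux


lemma isClosed_polyTorus (d : ℕ) : IsClosed (polyTorus d) := by
  have : polyTorus d = ⋂ j, {z : Fin d → ℂ | ‖z j‖ = 1} := by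
    ext z; simp [polyTorus, Set.mem_iInter]
  rw [this]
  exact isClosed_iInter fun j =>
    isClosed_eq (continuous_norm.comp (continuous_apply j)) continuous_const

lemma smul_mem_polyDisk {d : ℕ} {ζ : Fin d → ℂ} (hζ : ζ ∈ polyTorus d)
    {t : ℂ} (ht : ‖t‖ < 1) : (fun j => t * ζ j) ∈ polyDisk d := by
  intro j; rw [norm_mul, hζ j, mul_one]; exact ht

lemma smul_mem_polyTorus {d : ℕ} {ζ : Fin d → ℂ} (hζ : ζ ∈ polyTorus d)
    {t : ℂ} (ht : ‖t‖ = 1) : (fun j => t * ζ j) ∈ polyTorus d := by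
  intro j; rw [norm_mul, hζ j, mul_one]; exact ht

lemma aeval_eq_eval (d : ℕ) (f : MvPolynomial (Fin d) ℂ) (g : Fin d → ℂ) :
    MvPolynomial.aeval g f = MvPolynomial.eval g f := by
  rw [MvPolynomial.aeval_def, MvPolynomial.eval]
  simp

/-- the slice polynomial `t ↦ f (t • ζ)`. -/
def sliceP (d : ℕ) (f : MvPolynomial (Fin d) ℂ) (ζ : Fin d → ℂ) : Polynomial ℂ :=
  MvPolynomial.aeval (fun j => Polynomial.C (ζ j) * Polynomial.X) f

lemma sliceP_eval (d : ℕ) (f : MvPolynomial (Fin d) ℂ) (ζ : Fin d → ℂ) (t : ℂ) :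
    (sliceP d f ζ).eval t = MvPolynomial.eval (fun j => t * ζ j) f := by
  have h0 := MvPolynomial.comp_aeval_apply (Polynomial.aeval t)
    (f := fun j : Fin d => Polynomial.C (ζ j) * Polynomial.X) f
  have h1 : Polynomial.eval t ((MvPolynomial.aeval (fun j : Fin d => Polynomial.C (ζ j) * Polynomial.X)) f)
      = Polynomial.aeval t ((MvPolynomial.aeval (fun j : Fin d => Polynomial.C (ζ j) * Polynomial.X)) f) := by
    rw [Polynomial.coe_aeval_eq_eval]
  rw [sliceP, h1, h0]
  have h2 : (fun j : Fin d => Polynomial.aeval t (Polynomial.C (ζ j) * Polynomial.X))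
      = fun j => t * ζ j := by
    funext j
    rw [map_mul, Polynomial.aeval_C, Polynomial.aeval_X]
    simp [mul_comm t (ζ j)]
  rw [h2, aeval_eq_eval]


lemma norm_exp_mul_I (θ : ℝ) : ‖Complex.exp ((θ : ℂ) * Complex.I)‖ = 1 := by
  rw [Complex.norm_exp_ofReal_mul_I]

lemma injOn_exp : Set.InjOn (fun θ : ℝ => Complex.exp ((θ:ℂ) * Complex.I)) (Set.Ioc 0 1) := by
  intro a ha b hb hab
  simp only [Complex.exp_eq_exp_iff_exists_int] at hab
  obtain ⟨n, hn⟩ := hab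
  have h1 : ((a : ℂ)) = (b : ℂ) + (n : ℂ) * (2 * (Real.pi : ℂ)) :=
    mul_right_cancel₀ Complex.I_ne_zero (by linear_combination hn)
  have h2 : a = b + n * (2 * Real.pi) := by exact_mod_cast h1
  have hpi := Real.pi_gt_three
  rcases ha with ⟨ha1, ha2⟩
  rcases hb with ⟨hb1, hb2⟩
  have hn0 : n = 0 := by
    rcases lt_trichotomy n 0 with h | h | h
    · have : (n : ℝ) ≤ -1 := by exact_mod_cast (by omega : n ≤ -1)
      nlinarith
    · exact h
    · have : (1 : ℝ) ≤ (n : ℝ) := by exact_mod_cast (by omega : 1 ≤ n)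
      nlinarith
  rw [hn0] at h2; simpa using h2

lemma eventually_ne_zero (g : Polynomial ℂ) (hg : g ≠ 0) :
    ∀ᶠ θ : ℝ in 𝓝[>] (0:ℝ), g.eval (Complex.exp ((θ:ℂ) * Complex.I)) ≠ 0 := by
  set f : ℝ → ℂ := fun θ => Complex.exp ((θ:ℂ) * Complex.I) with hf
  set Z : Set ℝ := Set.Ioc 0 1 ∩ f ⁻¹' {x | g.IsRoot x} with hZ
  have hZfin : Z.Finite := by
    apply Set.Finite.of_finite_image (f := f)
    · exact (Polynomial.finite_setOf_isRoot hg).subset (by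
        rintro x ⟨θ, ⟨_, hθ2⟩, rfl⟩; exact hθ2)
    · exact injOn_exp.mono Set.inter_subset_left
  have hZc : Zᶜ ∈ 𝓝 (0:ℝ) := (hZfin.isClosed.isOpen_compl).mem_nhds (by
    simp only [Set.mem_compl_iff, hZ, Set.mem_inter_iff, Set.mem_Ioc]
    rintro ⟨⟨h0, _⟩, _⟩; exact lt_irrefl 0 h0)
  have h1 : ∀ᶠ θ : ℝ in 𝓝[>] (0:ℝ), θ ∈ Set.Ioo (0:ℝ) 1 :=
    Ioo_mem_nhdsGT_of_mem ⟨le_refl 0, zero_lt_one⟩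
  filter_upwards [h1, eventually_nhdsWithin_of_eventually_nhds
    (eventually_mem_set.mpr hZc)] with θ hθ hθZ
  intro hroot
  exact hθZ ⟨⟨hθ.1, le_of_lt hθ.2⟩, hroot⟩

lemma circle_vanish_eq_zero (P : Polynomial ℂ)
    (h : ∀ t : ℂ, ‖t‖ = 1 → P.eval t = 0) : P = 0 := by
  apply Polynomial.eq_zero_of_infinite_isRoot
  apply Set.Infinite.mono (s := (fun θ : ℝ => Complex.exp ((θ:ℂ) * Complex.I)) '' Set.Ioc 0 1)
  · rintro x ⟨θ, _, rfl⟩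
    exact h _ (norm_exp_mul_I θ)
  · exact (Set.Ioc_infinite zero_lt_one).image injOn_exp

/-- The key one-variable lemma. -/
lemma oneVar (P Q : Polynomial ℂ)
    (hP0 : ∀ t : ℂ, ‖t‖ < 1 → P.eval t ≠ 0)
    (hPQ : ∀ t : ℂ, ‖t‖ = 1 → ‖Q.eval t‖ = ‖P.eval t‖) :
    ∃ L : ℂ, ‖L‖ = 1 ∧
      Tendsto (fun r : ℝ => Q.eval (r:ℂ) / P.eval (r:ℂ)) (𝓝[<] (1:ℝ)) (𝓝 L) := by
  have hPne : P ≠ 0 := fun h => hP0 0 (by simp) (by simp [h])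
  have hQne : Q ≠ 0 := by
    intro h
    apply hPne
    apply circle_vanish_eq_zero
    intro t ht
    have := hPQ t ht
    rw [h] at this; simp at this
    exact norm_eq_zero.mp this.symm
  set g : Polynomial ℂ := GCDMonoid.gcd P Q with hgdef
  have hgne : g ≠ 0 := gcd_ne_zero_of_left hPne
  set P₁ : Polynomial ℂ := P / g with hP₁def
  set Q₁ : Polynomial ℂ := Q / g with hQ₁def
  have hPfac : g * P₁ = P := EuclideanDomain.mul_div_cancel' hgne (gcd_dvd_left P Q)
  have hQfac : g * Q₁ = Q := EuclideanDomain.mul_div_cancel' hgne (gcd_dvd_right P Q)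
  have hcop : IsCoprime P₁ Q₁ := isCoprime_div_gcd_div_gcd hQne
  have claimA : ∀ t : ℂ, ‖t‖ = 1 → g.eval t ≠ 0 →
      ‖Q₁.eval t‖ = ‖P₁.eval t‖ := by
    intro t ht hgt
    have h1 := hPQ t ht
    rw [← hPfac, ← hQfac, Polynomial.eval_mul, Polynomial.eval_mul, norm_mul, norm_mul] at h1
    exact mul_left_cancel₀ (norm_ne_zero_iff.mpr hgt) h1
  have claimB : ‖Q₁.eval 1‖ = ‖P₁.eval 1‖ := by
    set u : ℝ → ℝ := fun θ =>
      ‖Q₁.eval (Complex.exp ((θ:ℂ) * Complex.I))‖ - ‖P₁.eval (Complex.exp ((θ:ℂ) * Complex.I))‖ with hu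
    have hcont : Continuous u := by
      apply Continuous.sub <;>
        exact (continuous_norm.comp ((Polynomial.continuous _).comp
          (Complex.continuous_exp.comp (Complex.continuous_ofReal.mul continuous_const))))
    have hlim : Tendsto u (𝓝[>] (0:ℝ)) (𝓝 (u 0)) :=
      (hcont.tendsto 0).mono_left nhdsWithin_le_nhds
    have hev : ∀ᶠ θ : ℝ in 𝓝[>] (0:ℝ), u θ = 0 := by
      filter_upwards [eventually_ne_zero g hgne] with θ hθ
      have := claimA _ (norm_exp_mul_I θ) hθ
      simp only [hu]; linarith [this]
    have : u 0 = 0 := tendsto_nhds_unique (hlim.congr' hev) tendsto_const_nhds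
    simp only [hu] at this
    simp only [Complex.ofReal_zero, zero_mul, Complex.exp_zero] at this
    linarith
  have claimC : P₁.eval 1 ≠ 0 := by
    intro h
    have hq1 : Q₁.eval 1 = 0 := by
      rw [← norm_eq_zero, claimB, h, norm_zero]
    have := hcop.isUnit_of_dvd' (Polynomial.dvd_iff_isRoot.mpr h)
      (Polynomial.dvd_iff_isRoot.mpr hq1)
    exact Polynomial.not_isUnit_X_sub_C 1 this
  refine ⟨Q₁.eval 1 / P₁.eval 1, ?_, ?_⟩
  · rw [norm_div, claimB, div_self (norm_ne_zero_iff.mpr claimC)]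
  · have h1 : Tendsto (fun r : ℝ => ((r : ℂ))) (𝓝[<] (1:ℝ)) (𝓝 (1:ℂ)) := by
      have := (Complex.continuous_ofReal.tendsto 1).mono_left
        (nhdsWithin_le_nhds (s := Set.Iio (1:ℝ)))
      simpa using this
    have h2 : Tendsto (fun r : ℝ => Q₁.eval (r:ℂ) / P₁.eval (r:ℂ)) (𝓝[<] (1:ℝ))
        (𝓝 (Q₁.eval 1 / P₁.eval 1)) :=
      (((Polynomial.continuous Q₁).tendsto 1).comp h1).div
        (((Polynomial.continuous P₁).tendsto 1).comp h1) claimC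
    apply h2.congr'
    filter_upwards [Ioo_mem_nhdsLT_of_mem (show (1:ℝ) ∈ Set.Ioc (0:ℝ) 1 from ⟨zero_lt_one, le_refl 1⟩)]
      with r hr
    have hrnorm : ‖(r : ℂ)‖ < 1 := by
      rw [Complex.norm_real, Real.norm_eq_abs, abs_of_pos hr.1]; exact hr.2
    have hPr : P.eval (r:ℂ) ≠ 0 := hP0 _ hrnorm
    have hgr : g.eval (r:ℂ) ≠ 0 := by
      intro h
      apply hPr
      rw [← hPfac, Polynomial.eval_mul, h, zero_mul]
    rw [← hPfac, ← hQfac, Polynomial.eval_mul, Polynomial.eval_mul,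
      mul_div_mul_left _ _ hgr]

lemma torus_open_pos (d : ℕ) (hd : 0 < d) (V : Set (Fin d → ℂ)) (hV : IsOpen V)
    (τ : Fin d → ℂ) (hτ : τ ∈ V ∩ polyTorus d) :
    0 < torusLebesgue d (V ∩ polyTorus d) := by
  classical
  set Θ : (Fin d → ℝ) → (Fin d → ℂ) :=
    fun θ => fun j => Complex.exp ((θ j : ℂ) * Complex.I) with hΘdef
  have hΘc : Continuous Θ := by
    apply continuous_pi
    intro j
    exact Complex.continuous_exp.comp
      ((Complex.continuous_ofReal.comp (continuous_apply j)).mul continuous_const)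
  have hpi := Real.pi_pos
  -- choose angles
  set θ₀ : Fin d → ℝ := fun j =>
    if 0 ≤ Complex.arg (τ j) then Complex.arg (τ j) else Complex.arg (τ j) + 2 * Real.pi with hθ₀def
  have hθ₀mem : ∀ j, θ₀ j ∈ Set.Ico (0:ℝ) (2 * Real.pi) := by
    intro j
    have h1 := Complex.arg_le_pi (τ j)
    have h2 := Complex.neg_pi_lt_arg (τ j)
    simp only [hθ₀def]
    split_ifs with h
    · exact ⟨h, by linarith⟩
    · constructor <;> [linarith; linarith]
  have hΘτ : Θ θ₀ = τ := by
    funext j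
    have habs : (‖τ j‖ : ℂ) = 1 := by
      have := hτ.2 j
      rw [this]; norm_num
    have hbase : Complex.exp ((Complex.arg (τ j) : ℂ) * Complex.I) = τ j := by
      have := Complex.norm_mul_exp_arg_mul_I (τ j)
      rwa [habs, one_mul] at this
    simp only [hΘdef, hθ₀def]
    split_ifs with h
    · exact hbase
    · push_cast
      rw [add_mul, Complex.exp_add, hbase]
      rw [show ((2:ℂ) * (Real.pi:ℂ) * Complex.I) = 2 * Real.pi * Complex.I by push_cast; ring]
      rw [Complex.exp_two_pi_mul_I, mul_one]
  -- find a small box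
  have hθ₀V : θ₀ ∈ Θ ⁻¹' V := by simp [Set.mem_preimage, hΘτ, hτ.1]
  obtain ⟨ε, hε, hball⟩ := Metric.isOpen_iff.mp (hV.preimage hΘc) θ₀ hθ₀V
  set m : Fin d → ℝ := fun j => min (ε / 2) (2 * Real.pi - θ₀ j) with hmdef
  have hmpos : ∀ j, 0 < m j := by
    intro j
    exact lt_min (by linarith) (by linarith [(hθ₀mem j).2])
  set box : Set (Fin d → ℝ) := Set.pi Set.univ (fun j => Set.Ico (θ₀ j) (θ₀ j + m j)) with hboxdef
  have hboxV : box ⊆ Θ ⁻¹' V := by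
    intro x hx
    apply hball
    rw [Metric.mem_ball, dist_pi_lt_iff hε]
    intro j
    have hxj := hx j (Set.mem_univ j)
    have h0 : (0:ℝ) ≤ x j - θ₀ j := by linarith [hxj.1]
    rw [Real.dist_eq, _root_.abs_of_nonneg h0]
    have := hxj.2
    have h2 : m j ≤ ε / 2 := min_le_left _ _
    linarith
  have hbox2π : box ⊆ Set.pi Set.univ (fun _ => Set.Ico (0:ℝ) (2 * Real.pi)) := by
    intro x hx j _
    have hxj := hx j (Set.mem_univ j)
    have h1 := (hθ₀mem j).1
    have h2 : m j ≤ 2 * Real.pi - θ₀ j := min_le_right _ _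
    exact ⟨by linarith [hxj.1], by linarith [hxj.2]⟩
  have hboxvol : 0 < volume box := by
    rw [hboxdef, volume_pi_pi]
    rw [CanonicallyOrderedAdd.prod_pos]
    intro j _
    rw [Real.volume_Ico]
    simp only [add_sub_cancel_left]
    rw [ENNReal.ofReal_pos]
    exact hmpos j
  -- compute
  have hmeas : MeasurableSet (V ∩ polyTorus d) :=
    hV.measurableSet.inter (isClosed_polyTorus d).measurableSet
  have hpre : Θ ⁻¹' (V ∩ polyTorus d) = Θ ⁻¹' V := by
    ext θ
    simp only [Set.mem_preimage, Set.mem_inter_iff, and_iff_left_iff_imp]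
    intro _
    intro j
    exact norm_exp_mul_I (θ j)
  have happ : torusLebesgue d (V ∩ polyTorus d)
      = (ENNReal.ofReal ((2 * Real.pi) ^ d))⁻¹ *
        volume ((Θ ⁻¹' V) ∩ Set.pi Set.univ (fun _ => Set.Ico (0:ℝ) (2 * Real.pi))) := by
    rw [torusLebesgue, Measure.smul_apply, smul_eq_mul]
    congr 1
    rw [Measure.map_apply hΘc.measurable hmeas, hpre,
      Measure.restrict_apply (hV.preimage hΘc).measurableSet]
  rw [happ]
  apply ENNReal.mul_pos
  · exact ENNReal.inv_ne_zero.mpr ENNReal.ofReal_ne_top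
  · refine ne_of_gt (lt_of_lt_of_le hboxvol (measure_mono ?_))
    exact Set.subset_inter hboxV hbox2π

lemma tendsto_ray {ζ : Fin d → ℂ} :
    Tendsto (fun r : ℝ => (fun j => (r:ℂ) * ζ j)) (𝓝[<] (1:ℝ)) (𝓝 ζ) := by
  have hc : Continuous (fun r : ℝ => (fun j => (r:ℂ) * ζ j)) :=
    continuous_pi fun j => Complex.continuous_ofReal.mul continuous_const
  have := (hc.tendsto 1).mono_left (nhdsWithin_le_nhds (s := Set.Iio (1:ℝ)))
  simpa using this

lemma norm_ofReal_mem_Ioo {r : ℝ} (hr : r ∈ Set.Ioo (0:ℝ) 1) : ‖(r : ℂ)‖ < 1 := by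
  rw [Complex.norm_real, Real.norm_eq_abs, abs_of_pos hr.1]; exact hr.2

lemma radial_limit_of_p_ne_zero (hp : ∀ z ∈ polyDisk d, MvPolynomial.eval z p ≠ 0)
    {ζ : Fin d → ℂ} (hζ : ζ ∈ polyTorus d) (hpζ : MvPolynomial.eval ζ p ≠ 0) :
    HasRadialLimit d (fun z => MvPolynomial.eval z q / MvPolynomial.eval z p) ζ
      (MvPolynomial.eval ζ q / MvPolynomial.eval ζ p) := by
  exact (((MvPolynomial.continuous_eval _).tendsto ζ).comp tendsto_ray).div
    (((MvPolynomial.continuous_eval _).tendsto ζ).comp tendsto_ray) hpζ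

lemma norm_le_on_closed (hRIF : IsRIFd d p q) {ζ : Fin d → ℂ} (hζ : ζ ∈ polyTorus d) :
    ‖MvPolynomial.eval ζ q‖ ≤ ‖MvPolynomial.eval ζ p‖ := by
  set f : ℝ → ℝ := fun r =>
    ‖MvPolynomial.eval (fun j => (r:ℂ) * ζ j) p‖ - ‖MvPolynomial.eval (fun j => (r:ℂ) * ζ j) q‖
    with hf
  have hcont : Tendsto f (𝓝[<] (1:ℝ)) (𝓝 (‖MvPolynomial.eval ζ p‖ - ‖MvPolynomial.eval ζ q‖)) :=
    (((continuous_norm.comp (MvPolynomial.continuous_eval _)).tendsto ζ).comp tendsto_ray).sub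
      (((continuous_norm.comp (MvPolynomial.continuous_eval _)).tendsto ζ).comp tendsto_ray)
  have hev : ∀ᶠ r in 𝓝[<] (1:ℝ), 0 ≤ f r := by
    filter_upwards [Ioo_mem_nhdsLT_of_mem
      (show (1:ℝ) ∈ Set.Ioc (0:ℝ) 1 from ⟨zero_lt_one, le_refl 1⟩)] with r hr
    have hz : (fun j => ((r:ℂ)) * ζ j) ∈ polyDisk d :=
      smul_mem_polyDisk hζ (norm_ofReal_mem_Ioo hr)
    have h1 := hRIF.mapsToDisk _ hz
    have h2 := hRIF.stable _ hz
    rw [norm_div, div_lt_one (norm_pos_iff.mpr h2)] at h1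
    simp only [hf]
    linarith
  have := ge_of_tendsto hcont hev
  linarith

lemma norm_eq_on_torus (hd : 0 < d) (hRIF : IsRIFd d p q) {ζ : Fin d → ℂ}
    (hζ : ζ ∈ polyTorus d) :
    ‖MvPolynomial.eval ζ q‖ = ‖MvPolynomial.eval ζ p‖ := by
  by_contra hne
  have hlt : ‖MvPolynomial.eval ζ q‖ < ‖MvPolynomial.eval ζ p‖ :=
    lt_of_le_of_ne (norm_le_on_closed hRIF hζ) hne
  set V : Set (Fin d → ℂ) :=
    {z | ‖MvPolynomial.eval z q‖ < ‖MvPolynomial.eval z p‖} with hV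
  have hVopen : IsOpen V :=
    isOpen_lt (continuous_norm.comp (MvPolynomial.continuous_eval _))
      (continuous_norm.comp (MvPolynomial.continuous_eval _))
  have hsub : V ∩ polyTorus d ⊆ {ξ | ¬ ∃ L : ℂ, ‖L‖ = 1 ∧
      HasRadialLimit d (fun z => MvPolynomial.eval z q / MvPolynomial.eval z p) ξ L} := by
    rintro ξ ⟨hξV, hξT⟩ ⟨L, hL1, hL2⟩
    have hpξ : MvPolynomial.eval ξ p ≠ 0 := by
      intro h
      rw [hV] at hξV
      simp only [Set.mem_setOf_eq, h, norm_zero] at hξV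
      exact absurd hξV (not_lt.mpr (norm_nonneg _))
    have hrad := radial_limit_of_p_ne_zero (q := q) hRIF.stable hξT hpξ
    have hLeq : L = MvPolynomial.eval ξ q / MvPolynomial.eval ξ p :=
      tendsto_nhds_unique hL2 hrad
    rw [hLeq, norm_div, div_eq_one_iff_eq (norm_ne_zero_iff.mpr hpξ)] at hL1
    have hξV' : ‖MvPolynomial.eval ξ q‖ < ‖MvPolynomial.eval ξ p‖ := hξV
    rw [hL1] at hξV'
    exact lt_irrefl _ hξV'
  have hzero : torusLebesgue d (V ∩ polyTorus d) = 0 := by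
    have hae := hRIF.inner
    rw [ae_iff] at hae
    exact measure_mono_null hsub hae
  have hpos := torus_open_pos d hd V hVopen ζ ⟨hlt, hζ⟩
  rw [hzero] at hpos
  exact lt_irrefl 0 hpos

lemma exists_unimodular_radial_limit (hd : 0 < d) (hRIF : IsRIFd d p q)
    {ζ : Fin d → ℂ} (hζ : ζ ∈ polyTorus d) :
    ∃ L : ℂ, ‖L‖ = 1 ∧
      HasRadialLimit d (fun z => MvPolynomial.eval z q / MvPolynomial.eval z p) ζ L := by
  obtain ⟨L, hL1, hL2⟩ := oneVar (sliceP d p ζ) (sliceP d q ζ)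
    (fun t ht => by rw [sliceP_eval]; exact hRIF.stable _ (smul_mem_polyDisk hζ ht))
    (fun t ht => by
      rw [sliceP_eval, sliceP_eval]
      exact norm_eq_on_torus hd hRIF (smul_mem_polyTorus hζ ht))
  refine ⟨L, hL1, ?_⟩
  have heq : (fun r : ℝ => (sliceP d q ζ).eval (r:ℂ) / (sliceP d p ζ).eval (r:ℂ))
      = fun r : ℝ => MvPolynomial.eval (fun j => (r:ℂ) * ζ j) q
          / MvPolynomial.eval (fun j => (r:ℂ) * ζ j) p := by
    funext r; rw [sliceP_eval, sliceP_eval]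
  rw [HasRadialLimit]
  rw [← heq]
  exact hL2

lemma isClosed_clarkCube (d : ℕ) (r : ℝ) (ζ : Fin d → ℂ) : IsClosed (clarkCube d r ζ) := by
  have : clarkCube d r ζ
      = polyTorus d ∩ ⋂ j, {η : Fin d → ℂ | ‖(r : ℂ) * ζ j - η j‖ ≤ 2 * (1 - r)} := by
    ext η; simp [clarkCube, Set.mem_iInter, Set.mem_inter_iff]
  rw [this]
  exact (isClosed_polyTorus d).inter (isClosed_iInter fun j =>
    isClosed_le (Continuous.norm (by continuity)) continuous_const)

/-- The main measure estimate for a fixed radius. -/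
lemma cube_estimate (d : ℕ) (φ : (Fin d → ℂ) → ℂ) (α : ℂ) (σ : Measure (Fin d → ℂ))
    (hσ : IsClarkMeasureD d φ α σ) (U : Set (Fin d → ℂ)) (hU : IsOpen U)
    {ζ : Fin d → ℂ} (hζ : ζ ∈ polyTorus d) {r : ℝ} (hr : r ∈ Set.Ioo (0:ℝ) 1) :
    σ ((U ∩ polyTorus d) ∩ clarkCube d r ζ) / ENNReal.ofReal ((1 - r) ^ d)
      ≤ ENNReal.ofReal ((4:ℝ) ^ d *
          ((1 - ‖φ (fun j => (r:ℂ) * ζ j)‖ ^ 2) / ‖α - φ (fun j => (r:ℂ) * ζ j)‖ ^ 2)) := by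
  set z : Fin d → ℂ := fun j => (r:ℂ) * ζ j with hzdef
  have hz : z ∈ polyDisk d := smul_mem_polyDisk hζ (norm_ofReal_mem_Ioo hr)
  have hr1 : 0 < 1 - r := by linarith [hr.2]
  have hrnorm : ∀ j, ‖z j‖ = r := by
    intro j
    rw [hzdef]
    simp only [norm_mul, Complex.norm_real, Real.norm_eq_abs, abs_of_pos hr.1, hζ j, mul_one]
  set A : Set (Fin d → ℂ) := (U ∩ polyTorus d) ∩ clarkCube d r ζ with hA
  -- pointwise lower bound for the Poisson kernel on the cube
  have hlow : ∀ η ∈ A, ((4 * (1 - r))⁻¹) ^ d ≤ poissonD d z η := by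
    rintro η ⟨-, hηc⟩
    have hηT : η ∈ polyTorus d := hηc.1
    rw [poissonD]
    rw [show (((4 * (1 - r))⁻¹) ^ d : ℝ) = ∏ _j : Fin d, (4 * (1 - r))⁻¹ by
      rw [Finset.prod_const]; simp]
    apply Finset.prod_le_prod
    · intro j _
      positivity
    · intro j _
      have hden_pos : 0 < ‖η j - z j‖ := by
        rw [norm_pos_iff, sub_ne_zero]
        intro h
        have := hηT j
        rw [h, hrnorm j] at this
        linarith [hr.2]
      have hden_le : ‖η j - z j‖ ≤ 2 * (1 - r) := by
        rw [norm_sub_rev]; exact hηc.2 j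
      have hnum : 1 - r ≤ 1 - ‖z j‖ ^ 2 := by
        rw [hrnorm j]; nlinarith [hr.1, hr.2]
      have h1 : (1 - r) / (2 * (1 - r)) ^ 2 ≤ (1 - ‖z j‖ ^ 2) / ‖η j - z j‖ ^ 2 := by
        apply div_le_div₀ (by nlinarith [hrnorm j, hr.1, hr.2]) hnum
          (by positivity)
        exact pow_le_pow_left₀ (le_of_lt hden_pos) hden_le 2 |>.trans_eq rfl
      calc ((4 * (1 - r))⁻¹ : ℝ) = (1 - r) / (2 * (1 - r)) ^ 2 := by
            field_simp; ring
        _ ≤ _ := h1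
  -- measurability
  have hAmeas : MeasurableSet A :=
    (hU.measurableSet.inter (isClosed_polyTorus d).measurableSet).inter
      (isClosed_clarkCube d r ζ).measurableSet
  have hpois_meas : Measurable fun η : Fin d → ℂ => ENNReal.ofReal (poissonD d z η) := by
    apply ENNReal.measurable_ofReal.comp
    apply Finset.measurable_prod
    intro j _
    exact Measurable.div measurable_const
      (((continuous_apply j).sub continuous_const).norm.pow 2).measurable
  -- the chain of inequalities
  have hchain : ENNReal.ofReal (((4 * (1 - r))⁻¹) ^ d) * σ A
      ≤ ENNReal.ofReal ((1 - ‖φ z‖ ^ 2) / ‖α - φ z‖ ^ 2) := by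
    rw [← hσ.2 z hz]
    calc ENNReal.ofReal (((4 * (1 - r))⁻¹) ^ d) * σ A
        = ∫⁻ _ in A, ENNReal.ofReal (((4 * (1 - r))⁻¹) ^ d) ∂σ := by
          rw [setLIntegral_const]
      _ ≤ ∫⁻ η in A, ENNReal.ofReal (poissonD d z η) ∂σ := by
          apply setLIntegral_mono hpois_meas
          intro η hη
          exact ENNReal.ofReal_le_ofReal (hlow η hη)
      _ ≤ ∫⁻ η, ENNReal.ofReal (poissonD d z η) ∂σ := setLIntegral_le_lintegral _ _
  -- rearrange
  have hEpos : (0:ℝ) < (4 * (1 - r)) ^ d := by positivity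
  have hE : ENNReal.ofReal (((4 * (1 - r))⁻¹) ^ d)
      = (ENNReal.ofReal ((4 * (1 - r)) ^ d))⁻¹ := by
    rw [inv_pow, ENNReal.ofReal_inv_of_pos hEpos]
  have hσA : σ A ≤ ENNReal.ofReal ((4 * (1 - r)) ^ d)
      * ENNReal.ofReal ((1 - ‖φ z‖ ^ 2) / ‖α - φ z‖ ^ 2) := by
    rw [hE] at hchain
    calc σ A = ENNReal.ofReal ((4 * (1 - r)) ^ d)
        * ((ENNReal.ofReal ((4 * (1 - r)) ^ d))⁻¹ * σ A) := by
          rw [← mul_assoc, ENNReal.mul_inv_cancel (by simp [ENNReal.ofReal_pos, hEpos])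
            ENNReal.ofReal_ne_top, one_mul]
      _ ≤ _ := mul_le_mul_right hchain _
  rw [ENNReal.div_le_iff (by simp [ENNReal.ofReal_pos]; positivity) ENNReal.ofReal_ne_top]
  apply hσA.trans
  apply le_of_eq
  rw [mul_pow, ENNReal.ofReal_mul (by positivity),
    ENNReal.ofReal_mul (by positivity : (0:ℝ) ≤ (4:ℝ)^d)]
  ring

end ClarkAux

/-- Let `φ` be a rational inner function on `𝔻^d`, `α ∈ 𝕋`, and `σ_α`
the associated Clark measure. Let `B ⊆ 𝕋^d` be an open subset of the torus on which the
radial limit of `φ` is never `α`. Then for every `ζ ∈ B`,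
`σ_α(B ∩ D_r(ζ))/(1−r)^d → 0` as `r → 1⁻`. -/
theorem clark_density_zero
    (d : ℕ) (hd : 0 < d) (p q : MvPolynomial (Fin d) ℂ)
    (hRIF : IsRIFd d p q) (α : ℂ) (hα : ‖α‖ = 1)
    (σ : Measure (Fin d → ℂ))
    (hσ : IsClarkMeasureD d (fun z => MvPolynomial.eval z q / MvPolynomial.eval z p) α σ)
    (U : Set (Fin d → ℂ)) (hU : IsOpen U)
    (hB : ∀ ζ ∈ U ∩ polyTorus d,
      ¬ HasRadialLimit d (fun z => MvPolynomial.eval z q / MvPolynomial.eval z p) ζ α) :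
    ∀ ζ ∈ U ∩ polyTorus d,
      Tendsto (fun r : ℝ => σ ((U ∩ polyTorus d) ∩ clarkCube d r ζ) / ENNReal.ofReal ((1 - r) ^ d))
        (𝓝[<] (1 : ℝ)) (𝓝 0) := by
  intro ζ hζ
  set φ : (Fin d → ℂ) → ℂ := fun z => MvPolynomial.eval z q / MvPolynomial.eval z p with hφ
  obtain ⟨L, hL1, hL2⟩ := ClarkAux.exists_unimodular_radial_limit hd hRIF hζ.2
  have hLα : L ≠ α := fun h => hB ζ hζ (h ▸ hL2)
  -- the ratio tends to 0
  have hratio : Tendsto (fun r : ℝ => (4:ℝ) ^ d *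
      ((1 - ‖φ (fun j => (r:ℂ) * ζ j)‖ ^ 2) / ‖α - φ (fun j => (r:ℂ) * ζ j)‖ ^ 2))
      (𝓝[<] (1:ℝ)) (𝓝 0) := by
    have hφr : Tendsto (fun r : ℝ => φ (fun j => (r:ℂ) * ζ j)) (𝓝[<] (1:ℝ)) (𝓝 L) := hL2
    have hnum : Tendsto (fun r : ℝ => 1 - ‖φ (fun j => (r:ℂ) * ζ j)‖ ^ 2) (𝓝[<] (1:ℝ))
        (𝓝 0) := by
      have := (tendsto_const_nhds (x := (1:ℝ)) (f := 𝓝[<] (1:ℝ))).sub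
        (((continuous_norm.tendsto L).comp hφr).pow 2)
      simpa [hL1] using this
    have hden : Tendsto (fun r : ℝ => ‖α - φ (fun j => (r:ℂ) * ζ j)‖ ^ 2) (𝓝[<] (1:ℝ))
        (𝓝 (‖α - L‖ ^ 2)) :=
      ((continuous_norm.tendsto _).comp ((tendsto_const_nhds).sub hφr)).pow 2
    have hdne : ‖α - L‖ ^ 2 ≠ 0 := by
      apply pow_ne_zero
      rw [norm_ne_zero_iff, sub_ne_zero]
      exact fun h => hLα h.symm
    have := (hnum.div hden hdne).const_mul ((4:ℝ) ^ d)
    simpa using this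
  have hupper : Tendsto (fun r : ℝ => ENNReal.ofReal ((4:ℝ) ^ d *
      ((1 - ‖φ (fun j => (r:ℂ) * ζ j)‖ ^ 2) / ‖α - φ (fun j => (r:ℂ) * ζ j)‖ ^ 2)))
      (𝓝[<] (1:ℝ)) (𝓝 0) := by
    simpa using ENNReal.tendsto_ofReal hratio
  apply tendsto_of_tendsto_of_tendsto_of_le_of_le' tendsto_const_nhds hupper
  · exact Eventually.of_forall fun _ => zero_le
  · filter_upwards [Ioo_mem_nhdsLT_of_mem
      (show (1:ℝ) ∈ Set.Ioc (0:ℝ) 1 from ⟨zero_lt_one, le_refl 1⟩)] with r hr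
    exact ClarkAux.cube_estimate d φ α σ hσ U hU hζ.2 hr
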